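/- If H is a subgroup of a finite group G achieving the maximal Chermak-Delgado measure, then C_G(H) also achieves the maximal Chermak-Delgado measure, and H = C_G(C_G(H)). -/
import Mathlib

/-- The Chermak-Delgado measure of a subgroup `H` of `G`: `|H| * |C_G(H)|`. -/
noncomputable def cdMeasure {G : Type*} [Group G] (H : Subgroup G) : ℕ :=
  Nat.card H * Nat.card (Subgroup.centralizer (H : Set G))

/-- The Chermak-Delgado lattice: subgroups of maximal Chermak-Delgado measure. -/
def CD (G : Type*) [Group G] : Set (Subgroup G) :=
  {H : Subgroup G | ∀ K : Subgroup G, cdMeasure K ≤ cdMeasure H}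

lemma le_cc {G : Type*} [Group G] (H : Subgroup G) :
    H ≤ Subgroup.centralizer ((Subgroup.centralizer (H : Set G) : Subgroup G) : Set G) := by
  intro x hx
  rw [Subgroup.mem_centralizer_iff]
  intro y hy
  exact (Subgroup.mem_centralizer_iff.mp hy x hx).symm

theorem stmt_4 {G : Type*} [Group G] [Finite G] (H : Subgroup G) (hH : H ∈ CD G) :
    Subgroup.centralizer (H : Set G) ∈ CD G ∧
    H = Subgroup.centralizer ((Subgroup.centralizer (H : Set G) : Subgroup G) : Set G) := by
  set C := Subgroup.centralizer (H : Set G)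
  set CC := Subgroup.centralizer ((C : Subgroup G) : Set G)
  have hle : H ≤ CC := le_cc H
  have hcard : Nat.card H ≤ Nat.card CC := Subgroup.card_le_of_le hle
  have h1 : cdMeasure H ≤ cdMeasure C := by
    unfold cdMeasure
    calc Nat.card H * Nat.card C ≤ Nat.card CC * Nat.card C :=
          Nat.mul_le_mul_right _ hcard
      _ = Nat.card C * Nat.card CC := Nat.mul_comm _ _
  have h2 : cdMeasure C ≤ cdMeasure H := hH C
  have heq : cdMeasure C = cdMeasure H := le_antisymm h2 h1
  have hCpos : 0 < Nat.card C := Nat.card_pos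
  have hcards : Nat.card CC = Nat.card H := by
    have : Nat.card C * Nat.card CC = Nat.card H * Nat.card C := heq
    have : Nat.card CC * Nat.card C = Nat.card H * Nat.card C := by
      rw [Nat.mul_comm] at this; exact this
    exact Nat.eq_of_mul_eq_mul_right hCpos this
  have hHeq : H = CC := Subgroup.eq_of_le_of_card_ge hle hcards.le
  refine ⟨fun K => ?_, hHeq⟩
  calc cdMeasure K ≤ cdMeasure H := hH K
    _ = cdMeasure C := heq.symm
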